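/- Fix an odd integer m ≥ 1 and consider the (2+m)-dimensional vector space with even basis {e₁, e₂} and odd basis {y₁,…,y_m}, equipped with the bracket [y_i, e₁] = y_{i+1} for 1 ≤ i ≤ m-1, [y_{m+1-i}, y_i] = (-1)^{i+1} e₂ for 1 ≤ i ≤ (m+1)/2, extended by graded antisymmetry ([e₁, y_i] = -y_{i+1}, [y_i, y_{m+1-i}] = -(-1)^{i+1} e₂ when i ≠ m+1-i), and all other products of basis elements zero. Then this bracket satisfies the Jacobi superidentity, i.e., N_{2,m} is a Lie superalgebra. -/

import Mathlib

/-- The multiplication table of N_{2,m} (m odd) satisfies the Jacobi superidentity,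
i.e. N_{2,m} is a Lie superalgebra. -/
theorem statement4 {V : Type*} [AddCommGroup V] [Module ℂ V]
    (m : ℕ) (hm : Odd m) (hm1 : 1 ≤ m)
    (bas : Module.Basis (Fin 2 ⊕ Fin m) ℂ V)
    (eN yN : ℕ → V)
    (heN : ∀ k (h : 1 ≤ k ∧ k ≤ 2), eN k = bas (Sum.inl ⟨k - 1, by omega⟩))
    (heN0 : ∀ k, ¬(1 ≤ k ∧ k ≤ 2) → eN k = 0)
    (hyN : ∀ k (h : 1 ≤ k ∧ k ≤ m), yN k = bas (Sum.inr ⟨k - 1, by omega⟩))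
    (hyN0 : ∀ k, ¬(1 ≤ k ∧ k ≤ m) → yN k = 0)
    (br : V →ₗ[ℂ] V →ₗ[ℂ] V)
    (hee : ∀ i j, 1 ≤ i → i ≤ 2 → 1 ≤ j → j ≤ 2 → br (eN i) (eN j) = 0)
    (hey : ∀ i j, 1 ≤ i → i ≤ 2 → 1 ≤ j → j ≤ m →
      br (eN i) (yN j) = if i = 1 then -yN (j + 1) else 0)
    (hye : ∀ j i, 1 ≤ j → j ≤ m → 1 ≤ i → i ≤ 2 →
      br (yN j) (eN i) = if i = 1 then yN (j + 1) else 0)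
    (hyy : ∀ j k, 1 ≤ j → j ≤ m → 1 ≤ k → k ≤ m →
      br (yN j) (yN k) = if j + k = m + 1 then ((-1 : ℂ) ^ (k + 1)) • eN 2 else 0)
    (G : ZMod 2 → Submodule ℂ V)
    (hG0 : G 0 = Submodule.span ℂ (Set.range fun i : Fin 2 => bas (Sum.inl i)))
    (hG1 : G 1 = Submodule.span ℂ (Set.range fun j : Fin m => bas (Sum.inr j))) :
    ∀ (α β γ : ZMod 2), ∀ x ∈ G α, ∀ y ∈ G β, ∀ z ∈ G γ,
      ((-1 : ℂ) ^ (α.val * γ.val)) • br x (br y z) +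
        ((-1 : ℂ) ^ (α.val * β.val)) • br y (br z x) +
        ((-1 : ℂ) ^ (β.val * γ.val)) • br z (br x y) = 0 := by

  -- basis vectors in eN / yN form
  have hE : ∀ i : Fin 2, bas (Sum.inl i) = eN (i.val + 1) := by
    intro i
    rw [heN (i.val + 1) ⟨by omega, by have := i.2; omega⟩]
    congr 1
  have hY : ∀ j : Fin m, bas (Sum.inr j) = yN (j.val + 1) := by
    intro j
    rw [hyN (j.val + 1) ⟨by omega, by have := j.2; omega⟩]
    congr 1
  -- brackets with eN 2 vanish
  have hxe2 : ∀ v, br v (eN 2) = 0 := by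
    have h0 : br.flip (eN 2) = 0 := by
      apply Module.Basis.ext bas
      rintro (i | j)
      · rw [hE i]
        simpa using hee (i.val + 1) 2 (by omega) (by have := i.2; omega) (by omega) (by omega)
      · rw [hY j]
        have := hye (j.val + 1) 2 (by omega) (by have := j.2; omega) (by omega) (by omega)
        simpa using this
    intro v
    simpa using LinearMap.congr_fun h0 v
  have he2x : ∀ v, br (eN 2) v = 0 := by
    have h0 : br (eN 2) = 0 := by
      apply Module.Basis.ext bas
      rintro (i | j)
      · rw [hE i]
        simpa using hee 2 (i.val + 1) (by omega) (by omega) (by omega) (by have := i.2; omega)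
      · rw [hY j]
        have := hey 2 (j.val + 1) (by omega) (by omega) (by omega) (by have := j.2; omega)
        simpa using this
    intro v
    simpa using LinearMap.congr_fun h0 v
  -- totalized bracket rules (successor-indexed, hence unconditional)
  have he1y : ∀ k, 1 ≤ k → br (eN 1) (yN k) = -yN (k + 1) := by
    intro k hk
    by_cases h : k ≤ m
    · simpa using hey 1 k (by omega) (by omega) hk h
    · rw [hyN0 k (by omega), hyN0 (k + 1) (by omega), map_zero, neg_zero]
  have hye1 : ∀ k, 1 ≤ k → br (yN k) (eN 1) = yN (k + 1) := by
    intro k hk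
    by_cases h : k ≤ m
    · simpa using hye k 1 hk h (by omega) (by omega)
    · rw [hyN0 k (by omega), hyN0 (k + 1) (by omega), map_zero, LinearMap.zero_apply]
  have hyyT : ∀ j k, 1 ≤ j → 1 ≤ k → br (yN j) (yN k) =
      if j + k = m + 1 then ((-1 : ℂ) ^ (k + 1)) • eN 2 else 0 := by
    intro j k hj hk
    by_cases hjm : j ≤ m
    · by_cases hkm : k ≤ m
      · exact hyy j k hj hjm hk hkm
      · rw [hyN0 k (by omega), map_zero, if_neg (by omega)]
    · rw [hyN0 j (by omega), map_zero, LinearMap.zero_apply, if_neg (by omega)]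
  have hee11 : br (eN 1) (eN 1) = 0 := hee 1 1 (by omega) (by omega) (by omega) (by omega)
  -- parity
  have hpar : ∀ a b : ℕ, Odd (a + b) → ((-1 : ℂ) ^ a) + (-1 : ℂ) ^ b = 0 := by
    intro a b h
    rcases Nat.even_or_odd a with ha | ha
    · have hb : Odd b := by
        rcases ha with ⟨p, hp⟩; rcases h with ⟨q, hq⟩; exact ⟨q - p, by omega⟩
      rw [ha.neg_one_pow, hb.neg_one_pow]; ring
    · have hb : Even b := by
        rcases ha with ⟨p, hp⟩; rcases h with ⟨q, hq⟩; exact ⟨q - p, by omega⟩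
      rw [ha.neg_one_pow, hb.neg_one_pow]; ring
  -- bracket of an ite
  have hbr_ite : ∀ (v w : V) (P : Prop) [Decidable P] (c : ℂ),
      br v (if P then c • w else 0) = if P then c • br v w else 0 := by
    intro v w P _ c
    split <;> simp
  -- trilinear extension lemma
  have main : ∀ (s1 s2 s3 : ℂ) (A B C : Set V),
      (∀ a ∈ A, ∀ b ∈ B, ∀ c ∈ C,
        s1 • br a (br b c) + s2 • br b (br c a) + s3 • br c (br a b) = 0) →
      ∀ x ∈ Submodule.span ℂ A, ∀ y ∈ Submodule.span ℂ B, ∀ z ∈ Submodule.span ℂ C,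
        s1 • br x (br y z) + s2 • br y (br z x) + s3 • br z (br x y) = 0 := by
    intro s1 s2 s3 A B C h x hx
    induction hx using Submodule.span_induction with
    | mem a ha =>
      intro y hy
      induction hy using Submodule.span_induction with
      | mem b hb =>
        intro z hz
        induction hz using Submodule.span_induction with
        | mem c hc => exact h a ha b hb c hc
        | zero => simp
        | add u v hu hv ihu ihv =>
          have hrw : s1 • br a (br b (u + v)) + s2 • br b (br (u + v) a) +
              s3 • br (u + v) (br a b)
              = (s1 • br a (br b u) + s2 • br b (br u a) + s3 • br u (br a b))
                + (s1 • br a (br b v) + s2 • br b (br v a) + s3 • br v (br a b)) := by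
            simp only [map_add, LinearMap.add_apply, smul_add]
            abel
          rw [hrw, ihu, ihv, add_zero]
        | smul r u hu ihu =>
          have hrw : s1 • br a (br b (r • u)) + s2 • br b (br (r • u) a) +
              s3 • br (r • u) (br a b)
              = r • (s1 • br a (br b u) + s2 • br b (br u a) + s3 • br u (br a b)) := by
            simp only [map_smul, LinearMap.smul_apply, smul_add, smul_smul]
            rw [mul_comm s1 r, mul_comm s2 r, mul_comm s3 r]
          rw [hrw, ihu, smul_zero]
      | zero => intro z hz; simp
      | add u v hu hv ihu ihv =>
        intro z hz
        have hrw : s1 • br a (br (u + v) z) + s2 • br (u + v) (br z a) +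
            s3 • br z (br a (u + v))
            = (s1 • br a (br u z) + s2 • br u (br z a) + s3 • br z (br a u))
              + (s1 • br a (br v z) + s2 • br v (br z a) + s3 • br z (br a v)) := by
          simp only [map_add, LinearMap.add_apply, smul_add]
          abel
        rw [hrw, ihu z hz, ihv z hz, add_zero]
      | smul r u hu ihu =>
        intro z hz
        have hrw : s1 • br a (br (r • u) z) + s2 • br (r • u) (br z a) +
            s3 • br z (br a (r • u))
            = r • (s1 • br a (br u z) + s2 • br u (br z a) + s3 • br z (br a u)) := by
          simp only [map_smul, LinearMap.smul_apply, smul_add, smul_smul]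
          rw [mul_comm s1 r, mul_comm s2 r, mul_comm s3 r]
        rw [hrw, ihu z hz, smul_zero]
    | zero => intro y hy z hz; simp
    | add u v hu hv ihu ihv =>
      intro y hy z hz
      have hrw : s1 • br (u + v) (br y z) + s2 • br y (br z (u + v)) +
          s3 • br z (br (u + v) y)
          = (s1 • br u (br y z) + s2 • br y (br z u) + s3 • br z (br u y))
            + (s1 • br v (br y z) + s2 • br y (br z v) + s3 • br z (br v y)) := by
        simp only [map_add, LinearMap.add_apply, smul_add]
        abel
      rw [hrw, ihu y hy z hz, ihv y hy z hz, add_zero]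
    | smul r u hu ihu =>
      intro y hy z hz
      have hrw : s1 • br (r • u) (br y z) + s2 • br y (br z (r • u)) +
          s3 • br z (br (r • u) y)
          = r • (s1 • br u (br y z) + s2 • br y (br z u) + s3 • br z (br u y)) := by
        simp only [map_smul, LinearMap.smul_apply, smul_add, smul_smul]
        rw [mul_comm s1 r, mul_comm s2 r, mul_comm s3 r]
      rw [hrw, ihu y hy z hz, smul_zero]
  have hmod : m % 2 = 1 := Nat.odd_iff.mp hm
  intro α β γ x hx y hy z hz
  have hδ : ∀ δ : ZMod 2, δ = 0 ∨ δ = 1 := by decide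
  rcases hδ α with rfl | rfl <;> rcases hδ β with rfl | rfl <;> rcases hδ γ with rfl | rfl
  · -- EEE
    rw [hG0] at hx hy hz
    refine main _ _ _ _ _ _ ?_ x hx y hy z hz
    rintro a ⟨i, rfl⟩ b ⟨j, rfl⟩ c ⟨k, rfl⟩
    simp only [hE]
    rw [hee (j.val+1) (k.val+1) (by omega) (by have := j.2; omega) (by omega) (by have := k.2; omega),
        hee (k.val+1) (i.val+1) (by omega) (by have := k.2; omega) (by omega) (by have := i.2; omega),
        hee (i.val+1) (j.val+1) (by omega) (by have := i.2; omega) (by omega) (by have := j.2; omega)]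
    simp
  · -- EEY
    rw [hG0] at hx hy; rw [hG1] at hz
    refine main _ _ _ _ _ _ ?_ x hx y hy z hz
    rintro a ⟨i, rfl⟩ b ⟨j, rfl⟩ c ⟨k, rfl⟩
    simp only [hE, hY]
    rcases (show i.val = 0 ∨ i.val = 1 from by have := i.2; omega) with hi | hi <;>
    rcases (show j.val = 0 ∨ j.val = 1 from by have := j.2; omega) with hj | hj <;>
      simp only [hi, hj] <;> norm_num [ZMod.val_zero, ZMod.val_one]
    · rw [he1y (k.val+1) (by omega), map_neg, hye1 (k.val+1) (by omega), hee11, map_zero,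
          he1y (k.val+1+1) (by omega)]
      simp
    · simp [he2x, hxe2]
    · simp [he2x, hxe2]
    · simp [he2x, hxe2]
  · -- EYE
    rw [hG0] at hx hz; rw [hG1] at hy
    refine main _ _ _ _ _ _ ?_ x hx y hy z hz
    rintro a ⟨i, rfl⟩ b ⟨j, rfl⟩ c ⟨k, rfl⟩
    simp only [hE, hY]
    rcases (show i.val = 0 ∨ i.val = 1 from by have := i.2; omega) with hi | hi <;>
    rcases (show k.val = 0 ∨ k.val = 1 from by have := k.2; omega) with hk | hk <;>
      simp only [hi, hk] <;> norm_num [ZMod.val_zero, ZMod.val_one]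
    · rw [hye1 (j.val+1) (by omega), he1y (j.val+1) (by omega), map_neg,
          he1y (j.val+1+1) (by omega), hee11, map_zero]
      simp
    · simp [he2x, hxe2]
    · simp [he2x, hxe2]
    · simp [he2x, hxe2]
  · -- EYY
    rw [hG0] at hx; rw [hG1] at hy hz
    refine main _ _ _ _ _ _ ?_ x hx y hy z hz
    rintro a ⟨i, rfl⟩ b ⟨j, rfl⟩ c ⟨k, rfl⟩
    simp only [hE, hY]
    rcases (show i.val = 0 ∨ i.val = 1 from by have := i.2; omega) with hi | hi <;>
      simp only [hi] <;> norm_num [ZMod.val_zero, ZMod.val_one]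
    · rw [hyyT (j.val+1) (k.val+1) (by omega) (by omega), hbr_ite, hxe2, smul_zero, ite_self,
          hye1 (k.val+1) (by omega), hyyT (j.val+1) (k.val+1+1) (by omega) (by omega),
          he1y (j.val+1) (by omega), map_neg, hyyT (k.val+1) (j.val+1+1) (by omega) (by omega)]
      by_cases hc : j.val+1+(k.val+1+1) = m+1
      · rw [if_pos hc, if_pos (show k.val+1+(j.val+1+1) = m+1 by omega)]
        match_scalars
        linear_combination hpar (k.val+1+1+1) (j.val+1+1+1) (Nat.odd_iff.mpr (by omega))
      · rw [if_neg hc, if_neg (show ¬(k.val+1+(j.val+1+1) = m+1) by omega)]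
        simp
    · simp [he2x, hxe2]
  · -- YEE
    rw [hG1] at hx; rw [hG0] at hy hz
    refine main _ _ _ _ _ _ ?_ x hx y hy z hz
    rintro a ⟨j, rfl⟩ b ⟨i, rfl⟩ c ⟨k, rfl⟩
    simp only [hE, hY]
    rcases (show i.val = 0 ∨ i.val = 1 from by have := i.2; omega) with hi | hi <;>
    rcases (show k.val = 0 ∨ k.val = 1 from by have := k.2; omega) with hk | hk <;>
      simp only [hi, hk] <;> norm_num [ZMod.val_zero, ZMod.val_one]
    · rw [he1y (j.val+1) (by omega), map_neg, hye1 (j.val+1) (by omega),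
          he1y (j.val+1+1) (by omega), hee11, map_zero]
      simp
    · simp [he2x, hxe2]
    · simp [he2x, hxe2]
    · simp [he2x, hxe2]
  · -- YEY
    rw [hG1] at hx hz; rw [hG0] at hy
    refine main _ _ _ _ _ _ ?_ x hx y hy z hz
    rintro a ⟨j, rfl⟩ b ⟨i, rfl⟩ c ⟨k, rfl⟩
    simp only [hE, hY]
    rcases (show i.val = 0 ∨ i.val = 1 from by have := i.2; omega) with hi | hi <;>
      simp only [hi] <;> norm_num [ZMod.val_zero, ZMod.val_one]
    · rw [he1y (k.val+1) (by omega), map_neg, hyyT (j.val+1) (k.val+1+1) (by omega) (by omega),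
          hyyT (k.val+1) (j.val+1) (by omega) (by omega), hbr_ite, hxe2, smul_zero, ite_self,
          hye1 (j.val+1) (by omega), hyyT (k.val+1) (j.val+1+1) (by omega) (by omega)]
      by_cases hc : j.val+1+(k.val+1+1) = m+1
      · rw [if_pos hc, if_pos (show k.val+1+(j.val+1+1) = m+1 by omega)]
        match_scalars
        linear_combination hpar (k.val+1+1+1) (j.val+1+1+1) (Nat.odd_iff.mpr (by omega))
      · rw [if_neg hc, if_neg (show ¬(k.val+1+(j.val+1+1) = m+1) by omega)]
        simp
    · simp [he2x, hxe2]
  · -- YYE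
    rw [hG1] at hx hy; rw [hG0] at hz
    refine main _ _ _ _ _ _ ?_ x hx y hy z hz
    rintro a ⟨j, rfl⟩ b ⟨k, rfl⟩ c ⟨i, rfl⟩
    simp only [hE, hY]
    rcases (show i.val = 0 ∨ i.val = 1 from by have := i.2; omega) with hi | hi <;>
      simp only [hi] <;> norm_num [ZMod.val_zero, ZMod.val_one]
    · rw [hye1 (k.val+1) (by omega), hyyT (j.val+1) (k.val+1+1) (by omega) (by omega),
          he1y (j.val+1) (by omega), map_neg, hyyT (k.val+1) (j.val+1+1) (by omega) (by omega),
          hyyT (j.val+1) (k.val+1) (by omega) (by omega), hbr_ite, hxe2, smul_zero, ite_self]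
      by_cases hc : j.val+1+(k.val+1+1) = m+1
      · rw [if_pos hc, if_pos (show k.val+1+(j.val+1+1) = m+1 by omega)]
        match_scalars
        linear_combination hpar (k.val+1+1+1) (j.val+1+1+1) (Nat.odd_iff.mpr (by omega))
      · rw [if_neg hc, if_neg (show ¬(k.val+1+(j.val+1+1) = m+1) by omega)]
        simp
    · simp [he2x, hxe2]
  · -- YYY
    rw [hG1] at hx hy hz
    refine main _ _ _ _ _ _ ?_ x hx y hy z hz
    rintro a ⟨i, rfl⟩ b ⟨j, rfl⟩ c ⟨k, rfl⟩
    simp only [hE, hY]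
    rw [hyyT (j.val+1) (k.val+1) (by omega) (by omega),
        hyyT (k.val+1) (i.val+1) (by omega) (by omega),
        hyyT (i.val+1) (j.val+1) (by omega) (by omega)]
    simp [hbr_ite, hxe2]
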